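/- arXiv:1803.08449 — 6 statements merged into one kernel-verified Lean document; each statement's English description precedes it below -/
import Mathlib

section
/- The minimizer of the constrained problem is unique: if θ ∈ ℝⁿ satisfies E θ = 0 and (θ̂ − θ)ᵀ Σ⁻¹ (θ̂ − θ) = (θ̂ − θ̃)ᵀ Σ⁻¹ (θ̂ − θ̃), where θ̃ = θ̂ − Σ Eᵀ Σ₁₁⁻¹ E θ̂, then θ = θ̃. -/
open Matrix

/-- The `p × (p+q)` matrix `E = [I_p 0]` selecting the first `p` coordinates. -/
def Emat (p q : ℕ) : Matrix (Fin p) (Fin p ⊕ Fin q) ℝ :=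
  Matrix.fromCols 1 0

/-- The refined estimate `θ̃ = θ̂ − Σ Eᵀ Σ₁₁⁻¹ E θ̂`, where `Σ₁₁` is the
top-left `p × p` block of `Σ`. -/
noncomputable def refined {p q : ℕ} (S : Matrix (Fin p ⊕ Fin q) (Fin p ⊕ Fin q) ℝ)
    (θhat : Fin p ⊕ Fin q → ℝ) : Fin p ⊕ Fin q → ℝ :=
  θhat - (S * (Emat p q)ᵀ * (S.toBlocks₁₁)⁻¹ * Emat p q) *ᵥ θhat

lemma Emat_mulVec {p q : ℕ} (v : Fin p ⊕ Fin q → ℝ) :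
    Emat p q *ᵥ v = fun i => v (Sum.inl i) := by
  funext i
  simp [Emat, mulVec, dotProduct, Fintype.sum_sum_type, fromCols,
    Matrix.one_apply, Finset.sum_ite_eq]

lemma Emat_transpose_mulVec {p q : ℕ} (w : Fin p → ℝ) :
    (Emat p q)ᵀ *ᵥ w = Sum.elim w 0 := by
  funext i
  cases i with
  | inl i =>
    simp [Emat, mulVec, dotProduct, fromCols, Matrix.one_apply, Finset.sum_ite_eq]
  | inr i =>
    simp [Emat, mulVec, dotProduct, fromCols]

lemma mulVec_elim_inl {p q : ℕ} (S : Matrix (Fin p ⊕ Fin q) (Fin p ⊕ Fin q) ℝ)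
    (w : Fin p → ℝ) (i : Fin p) :
    (S *ᵥ Sum.elim w 0) (Sum.inl i) = (S.toBlocks₁₁ *ᵥ w) i := by
  simp [mulVec, dotProduct, Fintype.sum_sum_type, toBlocks₁₁]

lemma toBlocks₁₁_posDef {p q : ℕ} {S : Matrix (Fin p ⊕ Fin q) (Fin p ⊕ Fin q) ℝ}
    (hS : S.PosDef) : (S.toBlocks₁₁).PosDef := by
  refine posDef_iff_dotProduct_mulVec.mpr ⟨?_, ?_⟩
  · funext i j
    have := congrFun (congrFun hS.isHermitian (Sum.inl i)) (Sum.inl j)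
    simpa [toBlocks₁₁, conjTranspose_apply] using this
  · intro x hx
    have hy : (Sum.elim x 0 : Fin p ⊕ Fin q → ℝ) ≠ 0 := by
      intro h
      apply hx
      funext i
      exact congrFun h (Sum.inl i)
    have := hS.dotProduct_mulVec_pos hy
    have hval : star (Sum.elim x 0 : Fin p ⊕ Fin q → ℝ) ⬝ᵥ (S *ᵥ Sum.elim x 0)
        = star x ⬝ᵥ (S.toBlocks₁₁ *ᵥ x) := by
      simp only [star_trivial]
      rw [dotProduct, dotProduct, Fintype.sum_sum_type]
      simp [mulVec_elim_inl S x]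
    rwa [hval] at this

/-- Uniqueness of the constrained minimizer: if `E θ = 0` and the quadratic form
`(θ̂ − θ)ᵀ Σ⁻¹ (θ̂ − θ)` attains the value achieved by `θ̃`, then `θ = θ̃`. -/
theorem refined_unique_minimizer (p q : ℕ) (hp : 0 < p) (hq : 0 < q)
    (S : Matrix (Fin p ⊕ Fin q) (Fin p ⊕ Fin q) ℝ) (hS : S.PosDef)
    (θhat θ : Fin p ⊕ Fin q → ℝ)
    (hθ : Emat p q *ᵥ θ = 0)
    (heq : (θhat - θ) ⬝ᵥ (S⁻¹ *ᵥ (θhat - θ)) =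
      (θhat - refined S θhat) ⬝ᵥ (S⁻¹ *ᵥ (θhat - refined S θhat))) :
    θ = refined S θhat := by
  set S1 := S.toBlocks₁₁ with hS1def
  have hS1 : S1.PosDef := toBlocks₁₁_posDef hS
  have hS1det : IsUnit S1.det := (Matrix.isUnit_iff_isUnit_det _).mp hS1.isUnit
  have hSdet : IsUnit S.det := (Matrix.isUnit_iff_isUnit_det _).mp hS.isUnit
  set z : Fin p ⊕ Fin q → ℝ := Sum.elim (S1⁻¹ *ᵥ (Emat p q *ᵥ θhat)) 0 with hz
  -- θhat - refined = S *ᵥ z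
  have hdiff : θhat - refined S θhat = S *ᵥ z := by
    unfold refined
    rw [sub_sub_cancel]
    rw [← mulVec_mulVec, ← mulVec_mulVec, ← mulVec_mulVec, Emat_transpose_mulVec]
  have hinv : S⁻¹ *ᵥ (θhat - refined S θhat) = z := by
    rw [hdiff, mulVec_mulVec, Matrix.nonsing_inv_mul S hSdet, one_mulVec]
  -- E *ᵥ refined = 0
  have hEref : Emat p q *ᵥ refined S θhat = 0 := by
    have h1 : Emat p q *ᵥ (S *ᵥ z) = Emat p q *ᵥ θhat := by
      funext i
      rw [Emat_mulVec]
      have := mulVec_elim_inl S (S1⁻¹ *ᵥ (Emat p q *ᵥ θhat)) i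
      rw [hz]
      rw [show (fun i => (S *ᵥ Sum.elim (S1⁻¹ *ᵥ Emat p q *ᵥ θhat) 0) (Sum.inl i)) i
          = (S.toBlocks₁₁ *ᵥ (S1⁻¹ *ᵥ (Emat p q *ᵥ θhat))) i from this]
      rw [← hS1def, mulVec_mulVec, Matrix.mul_nonsing_inv S1 hS1det, one_mulVec]
    have : refined S θhat = θhat - S *ᵥ z := by
      have := hdiff
      linear_combination (norm := module) -this
    rw [this, mulVec_sub, h1, sub_self]
  -- the difference d
  set d : Fin p ⊕ Fin q → ℝ := refined S θhat - θ with hd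
  have hEd : ∀ i, d (Sum.inl i) = 0 := by
    intro i
    have : Emat p q *ᵥ d = 0 := by
      rw [hd, mulVec_sub, hEref, hθ, sub_self]
    have h2 := congrFun this i
    rw [Emat_mulVec] at hEref hθ
    simpa [hd, Pi.sub_apply, congrFun hEref i, congrFun hθ i] using
      sub_eq_zero.mpr (by
        have e1 : refined S θhat (Sum.inl i) = 0 := congrFun hEref i
        have e2 : θ (Sum.inl i) = 0 := congrFun hθ i
        rw [e1, e2])
  have hdz : d ⬝ᵥ z = 0 := by
    rw [dotProduct, Fintype.sum_sum_type]
    simp [hz, hEd]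
  -- expand the quadratic form
  set u : Fin p ⊕ Fin q → ℝ := θhat - refined S θhat with hu
  have hsplit : θhat - θ = u + d := by
    rw [hu, hd]; abel
  have hSinv : S⁻¹.PosDef := hS.inv
  have hSinvT : S⁻¹ᵀ = S⁻¹ := by
    have := hSinv.isHermitian
    simpa [Matrix.IsHermitian, conjTranspose_eq_transpose_of_trivial] using this
  have hcross1 : d ⬝ᵥ (S⁻¹ *ᵥ u) = 0 := by
    rw [hu, hinv, hdz]
  have hcross2 : u ⬝ᵥ (S⁻¹ *ᵥ d) = 0 := by
    rw [dotProduct_mulVec, ← mulVec_transpose, hSinvT, dotProduct_comm]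
    exact hcross1
  have hquad : d ⬝ᵥ (S⁻¹ *ᵥ d) = 0 := by
    rw [hsplit] at heq
    rw [mulVec_add, add_dotProduct, dotProduct_add, dotProduct_add, hcross1, hcross2] at heq
    linarith [heq]
  have hd0 : d = 0 := by
    by_contra hne
    have := hSinv.dotProduct_mulVec_pos hne
    rw [star_trivial, hquad] at this
    exact lt_irrefl 0 this
  have : refined S θhat - θ = 0 := by rw [← hd, hd0]
  linear_combination (norm := module) -this
end

section
/- Cholesky form of the refined estimator: for every θ̂ ∈ ℝⁿ, θ̂ − Σ Eᵀ Σ₁₁⁻¹ E θ̂ = C D C⁻¹ θ̂, where Σ = C Cᵀ, Σ₁₁ = C₁₁ C₁₁ᵀ is the top-left p×p block of Σ, E = [I_p 0], D = [[0,0],[0,I_q]]. -/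
open Matrix

/-- The block diagonal matrix `D = [[0,0],[0,I_q]]`. -/
def Dmat (p q : ℕ) : Matrix (Fin p ⊕ Fin q) (Fin p ⊕ Fin q) ℝ :=
  Matrix.fromBlocks 0 0 0 1

/-- The block lower triangular matrix `C = [[C₁₁,0],[C₂₁,C₂₂]]`. -/
def Cmat {p q : ℕ} (C₁₁ : Matrix (Fin p) (Fin p) ℝ) (C₂₁ : Matrix (Fin q) (Fin p) ℝ)
    (C₂₂ : Matrix (Fin q) (Fin q) ℝ) : Matrix (Fin p ⊕ Fin q) (Fin p ⊕ Fin q) ℝ :=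
  Matrix.fromBlocks C₁₁ 0 C₂₁ C₂₂

/-- Cholesky form of the refined estimator:
`θ̂ − Σ Eᵀ Σ₁₁⁻¹ E θ̂ = C D C⁻¹ θ̂` where `Σ = C Cᵀ` and `Σ₁₁` is its top-left block. -/
theorem refined_eq_cholesky_form (p q : ℕ) (hp : 0 < p) (hq : 0 < q)
    (C₁₁ : Matrix (Fin p) (Fin p) ℝ) (C₂₁ : Matrix (Fin q) (Fin p) ℝ)
    (C₂₂ : Matrix (Fin q) (Fin q) ℝ)
    (hC₁₁ : IsUnit C₁₁.det) (hC₂₂ : IsUnit C₂₂.det)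
    (θhat : Fin p ⊕ Fin q → ℝ) :
    θhat - (Cmat C₁₁ C₂₁ C₂₂ * (Cmat C₁₁ C₂₁ C₂₂)ᵀ * (Emat p q)ᵀ *
        ((Cmat C₁₁ C₂₁ C₂₂ * (Cmat C₁₁ C₂₁ C₂₂)ᵀ).toBlocks₁₁)⁻¹ * Emat p q) *ᵥ θhat =
      (Cmat C₁₁ C₂₁ C₂₂ * Dmat p q * (Cmat C₁₁ C₂₁ C₂₂)⁻¹) *ᵥ θhat := by

  have hA : IsUnit C₁₁ := (Matrix.isUnit_iff_isUnit_det _).mpr hC₁₁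
  have hB : IsUnit C₂₂ := (Matrix.isUnit_iff_isUnit_det _).mpr hC₂₂
  have hAT : C₁₁ᵀ * C₁₁ᵀ⁻¹ = 1 := Matrix.mul_nonsing_inv _ (by simpa using hC₁₁)
  have hA1 : C₁₁ * C₁₁⁻¹ = 1 := Matrix.mul_nonsing_inv _ hC₁₁
  have hB1 : C₂₂ * C₂₂⁻¹ = 1 := Matrix.mul_nonsing_inv _ hC₂₂
  have hSig : Cmat C₁₁ C₂₁ C₂₂ * (Cmat C₁₁ C₂₁ C₂₂)ᵀ =
      Matrix.fromBlocks (C₁₁ * C₁₁ᵀ) (C₁₁ * C₂₁ᵀ) (C₂₁ * C₁₁ᵀ) (C₂₁ * C₂₁ᵀ + C₂₂ * C₂₂ᵀ) := by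
    simp [Cmat, Matrix.fromBlocks_transpose, Matrix.fromBlocks_multiply]
  have hinv : ((Cmat C₁₁ C₂₁ C₂₂ * (Cmat C₁₁ C₂₁ C₂₂)ᵀ).toBlocks₁₁)⁻¹ = C₁₁ᵀ⁻¹ * C₁₁⁻¹ := by
    rw [hSig, Matrix.toBlocks_fromBlocks₁₁, Matrix.mul_inv_rev]
  have hEt : (Emat p q)ᵀ = Matrix.fromRows (1 : Matrix (Fin p) (Fin p) ℝ) 0 := by
    simp [Emat, Matrix.transpose_fromCols]
  have hM : Cmat C₁₁ C₂₁ C₂₂ * (Cmat C₁₁ C₂₁ C₂₂)ᵀ * (Emat p q)ᵀ *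
      ((Cmat C₁₁ C₂₁ C₂₂ * (Cmat C₁₁ C₂₁ C₂₂)ᵀ).toBlocks₁₁)⁻¹ * Emat p q =
      Matrix.fromBlocks 1 0 (C₂₁ * C₁₁⁻¹) 0 := by
    rw [hinv, hSig, hEt, Emat, Matrix.fromBlocks_mul_fromRows, Matrix.fromRows_mul,
      Matrix.fromRows_mul_fromCols]
    have h1 : C₁₁ * C₁₁ᵀ * C₁₁ᵀ⁻¹ * C₁₁⁻¹ = 1 := by
      rw [Matrix.mul_assoc C₁₁, hAT, Matrix.mul_one, hA1]
    have h2 : C₂₁ * C₁₁ᵀ * C₁₁ᵀ⁻¹ * C₁₁⁻¹ = C₂₁ * C₁₁⁻¹ := by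
      rw [Matrix.mul_assoc C₂₁, hAT, Matrix.mul_one]
    simp [← Matrix.mul_assoc, h1, h2]
  have hCinv : (Cmat C₁₁ C₂₁ C₂₂)⁻¹ =
      Matrix.fromBlocks C₁₁⁻¹ 0 (-(C₂₂⁻¹ * C₂₁ * C₁₁⁻¹)) C₂₂⁻¹ :=
    Matrix.inv_fromBlocks_zero₁₂_of_isUnit_iff _ _ _ (iff_of_true hA hB)
  have hR : Cmat C₁₁ C₂₁ C₂₂ * Dmat p q * (Cmat C₁₁ C₂₁ C₂₂)⁻¹ =
      Matrix.fromBlocks 0 0 (-(C₂₁ * C₁₁⁻¹)) 1 := by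
    rw [hCinv, Cmat, Dmat, Matrix.fromBlocks_multiply, Matrix.fromBlocks_multiply]
    congr 1 <;> simp [Matrix.mul_assoc, hB1, ← Matrix.mul_assoc, hB1]
  rw [hM, hR, sub_eq_iff_eq_add]
  rw [← Matrix.add_mulVec]
  congr 1
  rw [Matrix.fromBlocks_add, show ((0 : Matrix (Fin p) (Fin p) ℝ) + 1) = 1 from by simp,
    show (-(C₂₁ * C₁₁⁻¹) + C₂₁ * C₁₁⁻¹) = 0 from by simp, show ((0:Matrix (Fin p) (Fin q) ℝ) + 0) = 0 from by simp,
    show ((1 : Matrix (Fin q) (Fin q) ℝ) + 0) = 1 from by simp, Matrix.fromBlocks_one, Matrix.one_mulVec]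
end

section
/- Pythagorean decomposition in the Σ⁻¹ inner product: for every θ̂ ∈ ℝⁿ and every θ ∈ ℝⁿ with E θ = 0, writing θ̃ = C D C⁻¹ θ̂, one has (θ̂ − θ)ᵀ Σ⁻¹ (θ̂ − θ) = (θ̂ − θ̃)ᵀ Σ⁻¹ (θ̂ − θ̃) + (θ̃ − θ)ᵀ Σ⁻¹ (θ̃ − θ). -/
open Matrix

/-- Pythagorean decomposition in the `Σ⁻¹` inner product, with `θ̃ = C D C⁻¹ θ̂`
and `Σ = C Cᵀ`. -/
theorem pythagorean_decomposition (p q : ℕ) (hp : 0 < p) (hq : 0 < q)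
    (C₁₁ : Matrix (Fin p) (Fin p) ℝ) (C₂₁ : Matrix (Fin q) (Fin p) ℝ)
    (C₂₂ : Matrix (Fin q) (Fin q) ℝ)
    (hC₁₁ : IsUnit C₁₁.det) (hC₂₂ : IsUnit C₂₂.det)
    (θhat θ : Fin p ⊕ Fin q → ℝ) (hθ : Emat p q *ᵥ θ = 0) :
    (θhat - θ) ⬝ᵥ ((Cmat C₁₁ C₂₁ C₂₂ * (Cmat C₁₁ C₂₁ C₂₂)ᵀ)⁻¹ *ᵥ (θhat - θ)) =
      (θhat - (Cmat C₁₁ C₂₁ C₂₂ * Dmat p q * (Cmat C₁₁ C₂₁ C₂₂)⁻¹) *ᵥ θhat) ⬝ᵥ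
        ((Cmat C₁₁ C₂₁ C₂₂ * (Cmat C₁₁ C₂₁ C₂₂)ᵀ)⁻¹ *ᵥ
          (θhat - (Cmat C₁₁ C₂₁ C₂₂ * Dmat p q * (Cmat C₁₁ C₂₁ C₂₂)⁻¹) *ᵥ θhat)) +
      ((Cmat C₁₁ C₂₁ C₂₂ * Dmat p q * (Cmat C₁₁ C₂₁ C₂₂)⁻¹) *ᵥ θhat - θ) ⬝ᵥ
        ((Cmat C₁₁ C₂₁ C₂₂ * (Cmat C₁₁ C₂₁ C₂₂)ᵀ)⁻¹ *ᵥ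
          ((Cmat C₁₁ C₂₁ C₂₂ * Dmat p q * (Cmat C₁₁ C₂₁ C₂₂)⁻¹) *ᵥ θhat - θ)) := by
  set C := Cmat C₁₁ C₂₁ C₂₂ with hC
  have hCdet : IsUnit C.det := by
    rw [hC, Cmat, Matrix.det_fromBlocks_zero₁₂]
    exact hC₁₁.mul hC₂₂
  have hCinv : C⁻¹ * C = 1 := Matrix.nonsing_inv_mul _ hCdet
  have hCinv' : C * C⁻¹ = 1 := Matrix.mul_nonsing_inv _ hCdet
  have hSig : (C * Cᵀ)⁻¹ = (C⁻¹)ᵀ * C⁻¹ := by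
    rw [Matrix.mul_inv_rev, Matrix.transpose_nonsing_inv]
  have key : ∀ a b : Fin p ⊕ Fin q → ℝ,
      a ⬝ᵥ ((C * Cᵀ)⁻¹ *ᵥ b) = (C⁻¹ *ᵥ a) ⬝ᵥ (C⁻¹ *ᵥ b) := by
    intro a b
    rw [hSig, ← Matrix.mulVec_mulVec, Matrix.dotProduct_mulVec, Matrix.vecMul_transpose]
  set x : Fin p ⊕ Fin q → ℝ := C⁻¹ *ᵥ θhat with hx
  set y : Fin p ⊕ Fin q → ℝ := C⁻¹ *ᵥ θ with hy
  have h2 : C⁻¹ *ᵥ ((C * Dmat p q * C⁻¹) *ᵥ θhat) = Dmat p q *ᵥ x := by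
    rw [Matrix.mulVec_mulVec, ← mul_assoc, ← mul_assoc, hCinv, one_mul,
      ← Matrix.mulVec_mulVec, hx]
  -- first block of θ vanishes
  have hθ1 : ∀ i, θ (Sum.inl i) = 0 := by
    intro i
    have := congrFun hθ i
    simpa [Emat, Matrix.mulVec, dotProduct, Matrix.fromCols,
      Fintype.sum_sum_type, Matrix.one_apply] using this
  -- first block of y vanishes
  have hy1 : ∀ i, y (Sum.inl i) = 0 := by
    have hCy : C *ᵥ y = θ := by
      rw [hy, Matrix.mulVec_mulVec, hCinv', Matrix.one_mulVec]
    have h11 : C₁₁ *ᵥ (fun j => y (Sum.inl j)) = 0 := by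
      funext i
      have := congrFun hCy (Sum.inl i)
      simp [hC, Cmat, Matrix.mulVec, dotProduct, Fintype.sum_sum_type,
        hθ1 i] at this
      simpa [Matrix.mulVec, dotProduct] using this
    have : (fun j => y (Sum.inl j)) = C₁₁⁻¹ *ᵥ (C₁₁ *ᵥ fun j => y (Sum.inl j)) := by
      rw [Matrix.mulVec_mulVec, Matrix.nonsing_inv_mul _ hC₁₁, Matrix.one_mulVec]
    intro i
    rw [h11, Matrix.mulVec_zero] at this
    exact congrFun this i
  have hD1 : ∀ i, (Dmat p q *ᵥ x) (Sum.inl i) = 0 := by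
    intro i
    simp [Dmat, Matrix.mulVec, dotProduct, Fintype.sum_sum_type]
  have hD2 : ∀ j, (Dmat p q *ᵥ x) (Sum.inr j) = x (Sum.inr j) := by
    intro j
    simp [Dmat, Matrix.mulVec, dotProduct, Fintype.sum_sum_type,
      Matrix.one_apply]
  have hcross : (x - Dmat p q *ᵥ x) ⬝ᵥ (Dmat p q *ᵥ x - y) = 0 := by
    simp only [dotProduct, Fintype.sum_sum_type, Pi.sub_apply]
    rw [Finset.sum_eq_zero, Finset.sum_eq_zero, add_zero]
    · intro j _; rw [hD2]; ring
    · intro i _; rw [hD1, hy1]; ring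
  rw [key, key, key, Matrix.mulVec_sub, Matrix.mulVec_sub, Matrix.mulVec_sub, h2,
    ← hx, ← hy]
  have hsplit : x - y = (x - Dmat p q *ᵥ x) + (Dmat p q *ᵥ x - y) :=
    (sub_add_sub_cancel x (Dmat p q *ᵥ x) y).symm
  rw [hsplit, add_dotProduct, dotProduct_add, dotProduct_add,
    hcross, dotProduct_comm (Dmat p q *ᵥ x - y), hcross]
  ring
end

section
/- Matrix analogue of Theorem 2 (enforcing a larger relative degree improves accuracy): let C be an invertible n×n real matrix, Σ = C Cᵀ, and for a 0/1 diagonal n×n matrix D let P_D = C D C⁻¹. If D₁ and D₂ are 0/1 diagonal matrices with D₂ ≤ D₁ entrywise on the diagonal (D₂ has zeros in at least all the positions where D₁ does), then P_{D₂} Σ P_{D₂}ᵀ ⪯ P_{D₁} Σ P_{D₁}ᵀ in the positive semidefinite (Loewner) order, i.e. P_{D₁} Σ P_{D₁}ᵀ − P_{D₂} Σ P_{D₂}ᵀ is positive semidefinite. -/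
open Matrix

lemma key_aux (n : ℕ) (C D : Matrix (Fin n) (Fin n) ℝ) (h1 : C⁻¹ * C = 1)
    (hDD : D * D = D) (hDt : Dᵀ = D) :
    (C * D * C⁻¹) * (C * Cᵀ) * (C * D * C⁻¹)ᵀ = C * D * Cᵀ := by
  have h2 : Cᵀ * C⁻¹ᵀ = 1 := by rw [← transpose_mul, h1, transpose_one]
  have e1 : ∀ M : Matrix (Fin n) (Fin n) ℝ, C⁻¹ * (C * M) = M := fun M => by
    rw [← Matrix.mul_assoc, h1, Matrix.one_mul]
  have e2 : ∀ M : Matrix (Fin n) (Fin n) ℝ, Cᵀ * (C⁻¹ᵀ * M) = M := fun M => by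
    rw [← Matrix.mul_assoc, h2, Matrix.one_mul]
  simp only [transpose_mul, transpose_transpose, Matrix.mul_assoc, hDt]
  rw [e1, e2, ← Matrix.mul_assoc, ← Matrix.mul_assoc, Matrix.mul_assoc C D D, hDD, Matrix.mul_assoc]

lemma key_simp (n : ℕ) (C : Matrix (Fin n) (Fin n) ℝ) (hC : IsUnit C.det)
    (d : Fin n → ℝ) (hd : ∀ i, d i = 0 ∨ d i = 1) :
    (C * Matrix.diagonal d * C⁻¹) * (C * Cᵀ) * (C * Matrix.diagonal d * C⁻¹)ᵀ
      = C * Matrix.diagonal d * Cᵀ := by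
  refine key_aux n C _ (nonsing_inv_mul C hC) ?_ (diagonal_transpose d)
  rw [diagonal_mul_diagonal]
  have : (fun i => d i * d i) = d := funext fun i => by
    rcases hd i with h | h <;> simp [h]
  rw [this]

/-- Matrix analogue of "enforcing a larger relative degree improves accuracy":
for an invertible `C`, `Σ = C Cᵀ`, and 0/1 diagonal matrices `D₁ᵈ, D₂ᵈ` with the
diagonal of `D₂ᵈ` entrywise below that of `D₁ᵈ`, setting `P_D = C D C⁻¹` one has
`P_{D₂} Σ P_{D₂}ᵀ ⪯ P_{D₁} Σ P_{D₁}ᵀ` in the Loewner order. -/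
theorem larger_relative_degree_improves (n : ℕ) (C : Matrix (Fin n) (Fin n) ℝ)
    (hC : IsUnit C.det) (d₁ d₂ : Fin n → ℝ)
    (hd₁ : ∀ i, d₁ i = 0 ∨ d₁ i = 1) (hd₂ : ∀ i, d₂ i = 0 ∨ d₂ i = 1)
    (hle : ∀ i, d₂ i ≤ d₁ i) :
    ((C * Matrix.diagonal d₁ * C⁻¹) * (C * Cᵀ) * (C * Matrix.diagonal d₁ * C⁻¹)ᵀ -
      (C * Matrix.diagonal d₂ * C⁻¹) * (C * Cᵀ) *
        (C * Matrix.diagonal d₂ * C⁻¹)ᵀ).PosSemidef := by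
  rw [key_simp n C hC d₁ hd₁, key_simp n C hC d₂ hd₂]
  have heq : C * Matrix.diagonal d₁ * Cᵀ - C * Matrix.diagonal d₂ * Cᵀ
      = C * Matrix.diagonal (fun i => d₁ i - d₂ i) * Cᵀ := by
    rw [← diagonal_sub, Matrix.mul_sub, Matrix.sub_mul]
  rw [heq]
  have hdiag : (Matrix.diagonal (fun i => d₁ i - d₂ i)).PosSemidef :=
    posSemidef_diagonal_iff.mpr fun i => by
      simpa using sub_nonneg.mpr (hle i)
  have h := hdiag.mul_mul_conjTranspose_same C
  rw [conjTranspose_eq_transpose_of_trivial] at h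
  simpa [Matrix.mul_assoc, conjTranspose] using h
end

section
/- Matrix form of the asymptotic covariance relation [AsCov(θ̃ − θ₀)]⁻¹ = T [AsCov(θ̂ − θ₀)]⁻¹ Tᵀ: with T = [0 I_q] the q×n matrix selecting the last q coordinates, P = C D C⁻¹, and Σ = C Cᵀ, one has T (P Σ Pᵀ) Tᵀ = (T Σ⁻¹ Tᵀ)⁻¹; equivalently, both sides equal C₂₂ C₂₂ᵀ. -/
open Matrix

/-- The `q × (p+q)` matrix `T = [0 I_q]` selecting the last `q` coordinates. -/
def Tmat (p q : ℕ) : Matrix (Fin q) (Fin p ⊕ Fin q) ℝ :=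
  Matrix.fromCols 0 1

lemma Tmat_conj {p q : ℕ} (M : Matrix (Fin p ⊕ Fin q) (Fin p ⊕ Fin q) ℝ) :
    Tmat p q * M * (Tmat p q)ᵀ = M.toBlocks₂₂ := by
  ext i j
  simp [Tmat, Matrix.fromCols, Matrix.mul_apply, Fintype.sum_sum_type,
    Matrix.toBlocks₂₂, Finset.sum_mul, Matrix.one_apply]

/-- Matrix form of the asymptotic covariance relation: with `P = C D C⁻¹` and
`Σ = C Cᵀ`, one has `T (P Σ Pᵀ) Tᵀ = (T Σ⁻¹ Tᵀ)⁻¹`, and both sides equal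
`C₂₂ C₂₂ᵀ`. -/
theorem ascov_relation (p q : ℕ) (hp : 0 < p) (hq : 0 < q)
    (C₁₁ : Matrix (Fin p) (Fin p) ℝ) (C₂₁ : Matrix (Fin q) (Fin p) ℝ)
    (C₂₂ : Matrix (Fin q) (Fin q) ℝ)
    (hC₁₁ : IsUnit C₁₁.det) (hC₂₂ : IsUnit C₂₂.det) :
    Tmat p q * ((Cmat C₁₁ C₂₁ C₂₂ * Dmat p q * (Cmat C₁₁ C₂₁ C₂₂)⁻¹) *
          (Cmat C₁₁ C₂₁ C₂₂ * (Cmat C₁₁ C₂₁ C₂₂)ᵀ) *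
          (Cmat C₁₁ C₂₁ C₂₂ * Dmat p q * (Cmat C₁₁ C₂₁ C₂₂)⁻¹)ᵀ) * (Tmat p q)ᵀ =
        (Tmat p q * (Cmat C₁₁ C₂₁ C₂₂ * (Cmat C₁₁ C₂₁ C₂₂)ᵀ)⁻¹ * (Tmat p q)ᵀ)⁻¹ ∧
    Tmat p q * ((Cmat C₁₁ C₂₁ C₂₂ * Dmat p q * (Cmat C₁₁ C₂₁ C₂₂)⁻¹) *
          (Cmat C₁₁ C₂₁ C₂₂ * (Cmat C₁₁ C₂₁ C₂₂)ᵀ) *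
          (Cmat C₁₁ C₂₁ C₂₂ * Dmat p q * (Cmat C₁₁ C₂₁ C₂₂)⁻¹)ᵀ) * (Tmat p q)ᵀ =
        C₂₂ * C₂₂ᵀ := by
  set C := Cmat C₁₁ C₂₁ C₂₂ with hC
  have hu11 : IsUnit C₁₁ := (Matrix.isUnit_iff_isUnit_det _).mpr hC₁₁
  have hu22 : IsUnit C₂₂ := (Matrix.isUnit_iff_isUnit_det _).mpr hC₂₂
  have hCu : IsUnit C := by
    rw [hC, Cmat]
    exact Matrix.isUnit_fromBlocks_zero₁₂.mpr ⟨hu11, hu22⟩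
  have hCd : IsUnit C.det := (Matrix.isUnit_iff_isUnit_det _).mp hCu
  -- simplify P Σ Pᵀ to C D Cᵀ
  have hDD : Dmat p q * (Dmat p q)ᵀ = Dmat p q := by
    simp [Dmat, Matrix.fromBlocks_transpose, Matrix.fromBlocks_multiply]
  have hPSP : (C * Dmat p q * C⁻¹) * (C * Cᵀ) * (C * Dmat p q * C⁻¹)ᵀ
      = C * Dmat p q * Cᵀ := by
    have hdT : IsUnit Cᵀ.det := by simpa using hCd
    simp only [Matrix.transpose_mul, Matrix.mul_assoc, Matrix.transpose_nonsing_inv]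
    rw [Matrix.mul_nonsing_inv_cancel_left _ _ hdT, Matrix.nonsing_inv_mul_cancel_left _ _ hCd,
      ← Matrix.mul_assoc (Dmat p q), hDD]
  -- the left side equals C₂₂ C₂₂ᵀ
  have hL : Tmat p q * ((C * Dmat p q * C⁻¹) * (C * Cᵀ) * (C * Dmat p q * C⁻¹)ᵀ) *
      (Tmat p q)ᵀ = C₂₂ * C₂₂ᵀ := by
    rw [hPSP, Tmat_conj, hC, Cmat, Matrix.fromBlocks_transpose]
    simp [Dmat, Matrix.fromBlocks_multiply]
  -- the right side
  have hCinv : C⁻¹ = Matrix.fromBlocks C₁₁⁻¹ 0 (-(C₂₂⁻¹ * C₂₁ * C₁₁⁻¹)) C₂₂⁻¹ := by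
    rw [hC, Cmat]
    exact Matrix.inv_fromBlocks_zero₁₂_of_isUnit_iff _ _ _ (iff_of_true hu11 hu22)
  have hR : Tmat p q * (C * Cᵀ)⁻¹ * (Tmat p q)ᵀ = C₂₂ᵀ⁻¹ * C₂₂⁻¹ := by
    rw [Tmat_conj, Matrix.mul_inv_rev, ← Matrix.transpose_nonsing_inv, hCinv,
      Matrix.fromBlocks_transpose]
    simp [Matrix.fromBlocks_multiply, Matrix.transpose_nonsing_inv]
  have hR2 : (Tmat p q * (C * Cᵀ)⁻¹ * (Tmat p q)ᵀ)⁻¹ = C₂₂ * C₂₂ᵀ := by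
    rw [hR, Matrix.mul_inv_rev, Matrix.nonsing_inv_nonsing_inv _ hC₂₂,
      Matrix.nonsing_inv_nonsing_inv _ (by simpa using hC₂₂)]
  exact ⟨hL.trans hR2.symm, hL⟩
end

section
/- Probabilistic form of the orthogonality and covariance-decomposition properties: let (Ω, μ) be a probability space and X : Ω → ℝⁿ a square-integrable random vector with mean m = ∫ X dμ, whose covariance matrix Cov(X) = ∫ (X − m)(X − m)ᵀ dμ equals Σ = C Cᵀ. Then the cross-covariance of P X and X − P X is zero, ∫ (P X − P m)(X − P X − (m − P m))ᵀ dμ = 0, and the covariance of P X satisfies Cov(P X) = Cov(X) − Cov(X − P X). -/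
open Matrix MeasureTheory

/-- The covariance matrix `Cov(Y) = ∫ (Y − m_Y)(Y − m_Y)ᵀ dμ` of a random
vector `Y`, where `m_Y = ∫ Y dμ`. -/
noncomputable def covMatrix {Ω : Type*} [MeasurableSpace Ω] (μ : Measure Ω)
    {n : Type*} [Fintype n] (Y : Ω → n → ℝ) : Matrix n n ℝ :=
  Matrix.of fun i j =>
    ∫ ω, (Y ω i - (∫ ω', Y ω' ∂μ) i) * (Y ω j - (∫ ω', Y ω' ∂μ) j) ∂μ

lemma mul_mem2_integrable {Ω : Type*} [MeasurableSpace Ω] {μ : Measure Ω}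
    {f g : Ω → ℝ} (hf : MemLp f 2 μ) (hg : MemLp g 2 μ) :
    Integrable (fun ω => f ω * g ω) μ := by
  have h := L2.integrable_inner (𝕜 := ℝ) (hf.toLp f) (hg.toLp g)
  refine h.congr ?_
  filter_upwards [hf.coeFn_toLp, hg.coeFn_toLp] with ω h1 h2
  simp [h1, h2, mul_comm]

lemma crossCov_eq {Ω : Type*} [MeasurableSpace Ω] (μ : Measure Ω) [IsProbabilityMeasure μ]
    {n : Type*} [Fintype n] [DecidableEq n] (X : Ω → n → ℝ) (hX : MemLp X 2 μ)
    (A B : Matrix n n ℝ) :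
    (Matrix.of fun i j =>
      ∫ ω, ((A *ᵥ X ω) i - (A *ᵥ (∫ ω', X ω' ∂μ)) i) *
        ((B *ᵥ X ω) j - (B *ᵥ (∫ ω', X ω' ∂μ)) j) ∂μ : Matrix n n ℝ)
      = A * covMatrix μ X * Bᵀ := by
  set m : n → ℝ := ∫ ω', X ω' ∂μ with hm
  have hXi : ∀ i, MemLp (fun ω => X ω i) 2 μ := fun i =>
    (ContinuousLinearMap.proj (R := ℝ) (φ := fun _ : n => ℝ) i).comp_memLp' hX
  have hInt : ∀ k l, Integrable (fun ω => (X ω k - m k) * (X ω l - m l)) μ := fun k l =>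
    mul_mem2_integrable ((hXi k).sub (memLp_const _)) ((hXi l).sub (memLp_const _))
  ext i j
  have expand : ∀ ω, ((A *ᵥ X ω) i - (A *ᵥ m) i) * ((B *ᵥ X ω) j - (B *ᵥ m) j)
      = ∑ k, ∑ l, A i k * B j l * ((X ω k - m k) * (X ω l - m l)) := by
    intro ω
    have h1 : (A *ᵥ X ω) i - (A *ᵥ m) i = ∑ k, A i k * (X ω k - m k) := by
      simp [mulVec, dotProduct, mul_sub, Finset.sum_sub_distrib]
    have h2 : (B *ᵥ X ω) j - (B *ᵥ m) j = ∑ l, B j l * (X ω l - m l) := by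
      simp [mulVec, dotProduct, mul_sub, Finset.sum_sub_distrib]
    rw [h1, h2, Finset.sum_mul_sum]
    exact Finset.sum_congr rfl fun k _ => Finset.sum_congr rfl fun l _ => by ring
  have lhs : (∫ ω, ((A *ᵥ X ω) i - (A *ᵥ m) i) * ((B *ᵥ X ω) j - (B *ᵥ m) j) ∂μ)
      = ∑ k, ∑ l, A i k * B j l * (∫ ω, (X ω k - m k) * (X ω l - m l) ∂μ) := by
    simp_rw [expand]
    rw [integral_finset_sum _ fun k _ =>
      integrable_finset_sum _ fun l _ => (hInt k l).const_mul _]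
    exact Finset.sum_congr rfl fun k _ => by
      rw [integral_finset_sum _ fun l _ => (hInt k l).const_mul _]
      exact Finset.sum_congr rfl fun l _ => integral_const_mul _ _
  have rhs : (A * covMatrix μ X * Bᵀ) i j
      = ∑ k, ∑ l, A i k * B j l * (∫ ω, (X ω k - m k) * (X ω l - m l) ∂μ) := by
    simp only [Matrix.mul_apply, covMatrix, Matrix.of_apply, transpose_apply,
      Finset.sum_mul, ← hm]
    rw [Finset.sum_comm]
    exact Finset.sum_congr rfl fun k _ => Finset.sum_congr rfl fun l _ => by ring
  simp only [Matrix.of_apply, lhs, rhs]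

lemma integral_mulVec {Ω : Type*} [MeasurableSpace Ω] {μ : Measure Ω}
    {n : Type*} [Fintype n] [DecidableEq n] (A : Matrix n n ℝ) {X : Ω → n → ℝ}
    (hX : Integrable X μ) : ∫ ω, A *ᵥ X ω ∂μ = A *ᵥ ∫ ω, X ω ∂μ :=
  (A.mulVecLin.toContinuousLinearMap).integral_comp_comm hX

/-- Probabilistic orthogonality and covariance decomposition: if the
square-integrable random vector `X` has covariance `Σ = C Cᵀ`, then the
cross-covariance of `P X` and `X − P X` vanishes (with `P = C D C⁻¹`), and
`Cov(P X) = Cov(X) − Cov(X − P X)`. -/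
theorem refined_orthogonality_and_cov_decomposition
    {Ω : Type*} [MeasurableSpace Ω] (μ : Measure Ω) [IsProbabilityMeasure μ]
    (p q : ℕ) (hp : 0 < p) (hq : 0 < q)
    (C₁₁ : Matrix (Fin p) (Fin p) ℝ) (C₂₁ : Matrix (Fin q) (Fin p) ℝ)
    (C₂₂ : Matrix (Fin q) (Fin q) ℝ)
    (hC₁₁ : IsUnit C₁₁.det) (hC₂₂ : IsUnit C₂₂.det)
    (X : Ω → Fin p ⊕ Fin q → ℝ) (hX : MemLp X 2 μ)
    (hcov : covMatrix μ X = Cmat C₁₁ C₂₁ C₂₂ * (Cmat C₁₁ C₂₁ C₂₂)ᵀ) :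
    (Matrix.of fun i j =>
        ∫ ω, (((Cmat C₁₁ C₂₁ C₂₂ * Dmat p q * (Cmat C₁₁ C₂₁ C₂₂)⁻¹) *ᵥ X ω) i -
            ((Cmat C₁₁ C₂₁ C₂₂ * Dmat p q * (Cmat C₁₁ C₂₁ C₂₂)⁻¹) *ᵥ (∫ ω', X ω' ∂μ)) i) *
          ((X ω - (Cmat C₁₁ C₂₁ C₂₂ * Dmat p q * (Cmat C₁₁ C₂₁ C₂₂)⁻¹) *ᵥ X ω) j -
            ((∫ ω', X ω' ∂μ) -
              (Cmat C₁₁ C₂₁ C₂₂ * Dmat p q * (Cmat C₁₁ C₂₁ C₂₂)⁻¹) *ᵥ (∫ ω', X ω' ∂μ)) j) ∂μ :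
        Matrix (Fin p ⊕ Fin q) (Fin p ⊕ Fin q) ℝ) = 0 ∧
    covMatrix μ (fun ω => (Cmat C₁₁ C₂₁ C₂₂ * Dmat p q * (Cmat C₁₁ C₂₁ C₂₂)⁻¹) *ᵥ X ω) =
      covMatrix μ X -
        covMatrix μ (fun ω =>
          X ω - (Cmat C₁₁ C₂₁ C₂₂ * Dmat p q * (Cmat C₁₁ C₂₁ C₂₂)⁻¹) *ᵥ X ω) := by
  classical
  set Cm := Cmat C₁₁ C₂₁ C₂₂ with hCm
  set D := Dmat p q with hD
  set P := Cm * D * Cm⁻¹ with hP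
  have hC : IsUnit Cm.det := by
    rw [hCm, Cmat, Matrix.det_fromBlocks_zero₁₂]
    exact hC₁₁.mul hC₂₂
  have hCT : IsUnit Cmᵀ.det := by rwa [Matrix.det_transpose]
  have hDD : D * D = D := by
    simp [hD, Dmat, Matrix.fromBlocks_multiply]
  have hDT : Dᵀ = D := by
    simp [hD, Dmat, Matrix.fromBlocks_transpose]
  have hPT : Pᵀ = Cmᵀ⁻¹ * D * Cmᵀ := by
    rw [hP, Matrix.transpose_mul, Matrix.transpose_mul, Matrix.transpose_nonsing_inv, hDT,
      Matrix.mul_assoc]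
  set E := Cm * D * Cmᵀ with hE
  have hinv : Cm⁻¹ * Cm = 1 := Matrix.nonsing_inv_mul _ hC
  have hinvT : Cmᵀ * Cmᵀ⁻¹ = 1 := Matrix.mul_nonsing_inv _ hCT
  have hPS : P * (Cm * Cmᵀ) = E := by
    rw [hP, hE]
    simp only [Matrix.mul_assoc]
    rw [← Matrix.mul_assoc Cm⁻¹ Cm, hinv, Matrix.one_mul]
  have hSPT : (Cm * Cmᵀ) * Pᵀ = E := by
    rw [hPT, hE]
    simp only [Matrix.mul_assoc]
    rw [← Matrix.mul_assoc Cmᵀ Cmᵀ⁻¹, hinvT, Matrix.one_mul]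
  have hEPT : E * Pᵀ = E := by
    rw [hE, hPT]
    simp only [Matrix.mul_assoc]
    rw [← Matrix.mul_assoc Cmᵀ Cmᵀ⁻¹, hinvT, Matrix.one_mul, ← Matrix.mul_assoc D D, hDD]
  have hPSPT : P * (Cm * Cmᵀ) * Pᵀ = E := by
    rw [hPS, hE, hPT]
    simp only [Matrix.mul_assoc]
    rw [← Matrix.mul_assoc Cmᵀ Cmᵀ⁻¹, hinvT, Matrix.one_mul,
      ← Matrix.mul_assoc D D, hDD]
  have hXint : Integrable X μ := hX.integrable one_le_two
  set m : Fin p ⊕ Fin q → ℝ := ∫ ω', X ω' ∂μ with hm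
  -- first part
  have h1 : (Matrix.of fun i j =>
      ∫ ω, ((P *ᵥ X ω) i - (P *ᵥ m) i) *
        (((1 - P) *ᵥ X ω) j - ((1 - P) *ᵥ m) j) ∂μ :
      Matrix (Fin p ⊕ Fin q) (Fin p ⊕ Fin q) ℝ) = P * covMatrix μ X * (1 - P)ᵀ :=
    crossCov_eq μ X hX P (1 - P)
  have horth : P * covMatrix μ X * (1 - P)ᵀ = 0 := by
    rw [hcov, Matrix.transpose_sub, Matrix.transpose_one, Matrix.mul_sub,
      Matrix.mul_one, hPS, hEPT, sub_self]
  constructor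
  · rw [← h1] at horth
    rw [← horth]
    ext i j
    refine integral_congr_ae (Filter.Eventually.of_forall fun ω => ?_)
    simp [Matrix.sub_mulVec, Matrix.one_mulVec]
  -- second part
  · have hmean : (∫ ω', P *ᵥ X ω' ∂μ) = P *ᵥ m := integral_mulVec P hXint
    have hcovP : covMatrix μ (fun ω => P *ᵥ X ω) = P * covMatrix μ X * Pᵀ := by
      rw [← crossCov_eq μ X hX P P]
      unfold covMatrix
      ext i j
      simp [hmean, ← hm]
    have hfun : (fun ω => X ω - P *ᵥ X ω) = fun ω => (1 - P) *ᵥ X ω := by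
      funext ω
      rw [Matrix.sub_mulVec, Matrix.one_mulVec]
    have hcovQ : covMatrix μ (fun ω => X ω - P *ᵥ X ω)
        = (1 - P) * covMatrix μ X * (1 - P)ᵀ := by
      rw [hfun, ← crossCov_eq μ X hX (1 - P) (1 - P)]
      have hmean' : (∫ ω', (1 - P) *ᵥ X ω' ∂μ) = (1 - P) *ᵥ m := integral_mulVec _ hXint
      unfold covMatrix
      ext i j
      simp [hmean', ← hm]
    rw [hcovP, hcovQ, hcov]
    have expandQ : (1 - P) * (Cm * Cmᵀ) * (1 - P)ᵀ = Cm * Cmᵀ - E := by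
      have step : (1 - P) * (Cm * Cmᵀ) * (1 - P)ᵀ
          = Cm * Cmᵀ - Cm * Cmᵀ * Pᵀ - (P * (Cm * Cmᵀ) - P * (Cm * Cmᵀ) * Pᵀ) := by
        rw [Matrix.transpose_sub, Matrix.transpose_one]
        noncomm_ring
      rw [step, hPS, hSPT, hEPT]
      abel
    rw [expandQ, hPSPT]
    abel
end
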